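/- Hoeffding upper-tail bound for the hypergeometric distribution: Let N ≥ 1, K ≤ N, n ≤ N, and let X be distributed according to the hypergeometric distribution with population size N, K marked items, and n draws, so that E[X] = (K/N)·n. Then for every real χ ≥ 0 with (K/N) + χ ≤ 1, the probability that X ≥ ((K/N) + χ)·n is at most exp(−2·χ²·n). -/

import Mathlib

open Finset

/-- The probability mass function of the hypergeometric distribution with
population size `N`, of which `K` are marked, and `n` draws without replacement:
`Pr[X = j] = (K choose j) · (N−K choose n−j) / (N choose n)`. -/
noncomputable def hypergeomPMF (N K n j : ℕ) : ℝ :=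
  ((K.choose j : ℝ) * ((N - K).choose (n - j) : ℝ)) / (N.choose n : ℝ)


lemma descF_ineq (K N : ℕ) (hK : K ≤ N) (i : ℕ) :
    K.descFactorial i * N ^ i ≤ N.descFactorial i * K ^ i := by
  induction i with
  | zero => simp
  | succ i ih =>
    rw [Nat.descFactorial_succ, Nat.descFactorial_succ, pow_succ, pow_succ]
    have h1 : (K - i) * N ≤ (N - i) * K := by
      rcases le_or_gt i K with h | h
      · rw [Nat.sub_mul, Nat.sub_mul]
        have h2 : i * K ≤ i * N := Nat.mul_le_mul_left i hK
        have h3 : K * N = N * K := Nat.mul_comm _ _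
        omega
      · simp [Nat.sub_eq_zero_of_le h.le]
    calc (K - i) * K.descFactorial i * (N ^ i * N)
        = ((K - i) * N) * (K.descFactorial i * N ^ i) := by ring
      _ ≤ ((N - i) * K) * (N.descFactorial i * K ^ i) := Nat.mul_le_mul h1 ih
      _ = (N - i) * N.descFactorial i * (K ^ i * K) := by ring

lemma choose_pow_ineq (K N : ℕ) (hK : K ≤ N) (i : ℕ) :
    K.choose i * N ^ i ≤ N.choose i * K ^ i := by
  have h := descF_ineq K N hK i
  rw [Nat.descFactorial_eq_factorial_mul_choose, Nat.descFactorial_eq_factorial_mul_choose,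
    mul_assoc, mul_assoc] at h
  exact Nat.le_of_mul_le_mul_left h (Nat.factorial_pos i)


lemma Akey (N K n i : ℕ) (hK : K ≤ N) (hi : i ≤ n) (hiK : i ≤ K) :
    ∑ j ∈ range (n+1), j.choose i * (K.choose j * (N-K).choose (n-j))
      = K.choose i * (N-i).choose (n-i) := by
  rw [range_eq_Ico, ← Finset.sum_Ico_consecutive _ (Nat.zero_le i) (by omega : i ≤ n+1)]
  have h0 : ∑ j ∈ Ico 0 i, j.choose i * (K.choose j * (N-K).choose (n-j)) = 0 := by
    apply Finset.sum_eq_zero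
    intro j hj
    simp only [mem_Ico] at hj
    rw [Nat.choose_eq_zero_of_lt hj.2, zero_mul]
  rw [h0, zero_add, Finset.sum_Ico_eq_sum_range]
  have hidx : n + 1 - i = (n - i) + 1 := by omega
  rw [hidx]
  have hterm : ∀ m ∈ range ((n-i)+1),
      (i+m).choose i * (K.choose (i+m) * (N-K).choose (n-(i+m)))
        = K.choose i * ((K-i).choose m * (N-K).choose ((n-i)-m)) := by
    intro m _
    have hsub : n - (i+m) = (n-i) - m := by omega
    rw [hsub]
    rcases le_or_gt (i+m) K with h | h
    · have := Nat.choose_mul (n := K) (by omega : i ≤ i + m)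
      -- choose_mul : n.choose k * k.choose s = n.choose s * (n-s).choose (k-s)
      have h2 : (i + m) - i = m := by omega
      rw [h2] at this
      calc (i+m).choose i * (K.choose (i+m) * (N-K).choose ((n-i)-m))
          = (K.choose (i+m) * (i+m).choose i) * (N-K).choose ((n-i)-m) := by ring
        _ = (K.choose i * (K-i).choose m) * (N-K).choose ((n-i)-m) := by rw [this]
        _ = K.choose i * ((K-i).choose m * (N-K).choose ((n-i)-m)) := by ring
    · rw [Nat.choose_eq_zero_of_lt h, Nat.choose_eq_zero_of_lt (by omega : K - i < m)]
      ring
  rw [Finset.sum_congr rfl hterm, ← Finset.mul_sum]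
  congr 1
  have hv := Nat.add_choose_eq (K - i) (N - K) (n - i)
  rw [Finset.Nat.sum_antidiagonal_eq_sum_range_succ_mk] at hv
  have hKN : K - i + (N - K) = N - i := by omega
  rw [hKN] at hv
  exact hv.symm

lemma coeff_bound (N K n i : ℕ) (hN : 1 ≤ N) (hK : K ≤ N) (hn : n ≤ N) (hi : i ≤ n) :
    ((∑ j ∈ range (n+1), j.choose i * (K.choose j * (N-K).choose (n-j)) : ℕ) : ℝ)
      ≤ (N.choose n : ℝ) * (n.choose i : ℝ) * ((K:ℝ)/N)^i := by
  have hNpos : (0:ℝ) < (N:ℝ) := by exact_mod_cast hN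
  rcases le_or_gt i K with hiK | hiK
  · rw [Akey N K n i hK hi hiK]
    have hcm := Nat.choose_mul (n := N) hi  -- N.choose n * n.choose i = N.choose i * (N-i).choose (n-i)
    have hcast : (N.choose n : ℝ) * (n.choose i : ℝ) = (N.choose i : ℝ) * ((N-i).choose (n-i) : ℝ) := by
      exact_mod_cast congrArg (Nat.cast (R := ℝ)) hcm
    rw [hcast]
    have h1 : (K.choose i : ℝ) ≤ (N.choose i : ℝ) * ((K:ℝ)/N)^i := by
      have h := choose_pow_ineq K N hK i
      have hcast2 : (K.choose i : ℝ) * (N:ℝ)^i ≤ (N.choose i : ℝ) * (K:ℝ)^i := by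
        exact_mod_cast h
      rw [div_pow, ← mul_div_assoc, le_div_iff₀ (by positivity)]
      linarith
    push_cast
    calc (K.choose i : ℝ) * ((N-i).choose (n-i) : ℝ)
        ≤ ((N.choose i : ℝ) * ((K:ℝ)/N)^i) * ((N-i).choose (n-i) : ℝ) := by
          apply mul_le_mul_of_nonneg_right h1 (by positivity)
      _ = (N.choose i : ℝ) * ((N-i).choose (n-i) : ℝ) * ((K:ℝ)/N)^i := by ring
  · have hz : ∑ j ∈ range (n+1), j.choose i * (K.choose j * (N-K).choose (n-j)) = 0 := by
      apply Finset.sum_eq_zero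
      intro j hj
      rcases le_or_gt j K with h | h
      · rw [Nat.choose_eq_zero_of_lt (by omega : j < i), zero_mul]
      · rw [Nat.choose_eq_zero_of_lt h, zero_mul, mul_zero]
    rw [hz]
    simp only [Nat.cast_zero]
    positivity

lemma mgf_bound (N K n : ℕ) (hN : 1 ≤ N) (hK : K ≤ N) (hn : n ≤ N) (t : ℝ) (ht : 0 ≤ t) :
    ∑ j ∈ range (n+1), ((K.choose j * (N-K).choose (n-j) : ℕ) : ℝ) * (1+t)^j
      ≤ (N.choose n : ℝ) * (1 + (K:ℝ)/N * t)^n := by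
  have hexp : ∀ j ∈ range (n+1),
      ((K.choose j * (N-K).choose (n-j) : ℕ) : ℝ) * (1+t)^j
        = ∑ i ∈ range (n+1), ((K.choose j * (N-K).choose (n-j) : ℕ) : ℝ) * ((j.choose i : ℝ) * t^i) := by
    intro j hj
    simp only [mem_range] at hj
    have h1 : (1+t)^j = ∑ i ∈ range (n+1), (j.choose i : ℝ) * t^i := by
      rw [add_comm (1:ℝ) t, add_pow]
      simp only [one_pow, mul_one]
      rw [← Finset.sum_subset (Finset.range_subset_range.mpr (by omega : j+1 ≤ n+1))]
      · exact Finset.sum_congr rfl (fun i _ => by ring)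
      · intro i _ hi
        simp only [mem_range, not_lt] at hi
        rw [Nat.choose_eq_zero_of_lt (by omega), Nat.cast_zero, zero_mul]
    rw [h1, Finset.mul_sum]
  rw [Finset.sum_congr rfl hexp, Finset.sum_comm]
  have hrhs : (N.choose n : ℝ) * (1 + (K:ℝ)/N * t)^n
      = ∑ i ∈ range (n+1), (N.choose n : ℝ) * ((n.choose i : ℝ) * ((K:ℝ)/N)^i * t^i) := by
    rw [add_comm (1:ℝ), add_pow]
    simp only [one_pow, mul_one, mul_pow]
    rw [Finset.mul_sum]
    exact Finset.sum_congr rfl (fun i _ => by ring)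
  rw [hrhs]
  apply Finset.sum_le_sum
  intro i hi
  simp only [mem_range] at hi
  have hc := coeff_bound N K n i hN hK hn (by omega)
  calc ∑ j ∈ range (n+1), ((K.choose j * (N-K).choose (n-j) : ℕ) : ℝ) * ((j.choose i : ℝ) * t^i)
      = ((∑ j ∈ range (n+1), j.choose i * (K.choose j * (N-K).choose (n-j)) : ℕ) : ℝ) * t^i := by
        push_cast
        rw [Finset.sum_mul]
        exact Finset.sum_congr rfl (fun j _ => by ring)
    _ ≤ ((N.choose n : ℝ) * (n.choose i : ℝ) * ((K:ℝ)/N)^i) * t^i := by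
        apply mul_le_mul_of_nonneg_right hc (by positivity)
    _ = (N.choose n : ℝ) * ((n.choose i : ℝ) * ((K:ℝ)/N)^i * t^i) := by ring

lemma hoeff_core (p t : ℝ) (hp0 : 0 ≤ p) (hp1 : p ≤ 1) (ht : 0 ≤ t) :
    1 - p + p * Real.exp t ≤ Real.exp (p * t + t^2/8) := by
  set D : ℝ → ℝ := fun x => 1 - p + p * Real.exp x with hDdef
  have Dpos : ∀ x, 0 < D x := by
    intro x
    have h1 := Real.exp_pos x
    simp only [hDdef]
    rcases eq_or_lt_of_le hp0 with h | h
    · simp [← h]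
    · nlinarith [mul_pos h h1]
  have hD : ∀ x, HasDerivAt D (p * Real.exp x) x := by
    intro x
    exact ((Real.hasDerivAt_exp x).const_mul p).const_add (1 - p)
  -- inner function g
  set g : ℝ → ℝ := fun x => p + x/4 - p * Real.exp x / D x with hgdef
  have hQ : ∀ x, HasDerivAt (fun x => p * Real.exp x / D x)
      (p * Real.exp x * (1 - p) / (D x)^2) x := by
    intro x
    have h := ((Real.hasDerivAt_exp x).const_mul p).div (hD x) (ne_of_gt (Dpos x))
    refine h.congr_deriv ?_
    simp only [hDdef]
    ring
  have hg : ∀ x, HasDerivAt g (1/4 - p * Real.exp x * (1 - p) / (D x)^2) x := by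
    intro x
    have h1 : HasDerivAt (fun x : ℝ => p + x/4) (1/4) x := by
      simpa using ((hasDerivAt_id x).div_const 4).const_add p
    exact h1.sub (hQ x)
  have hgmono : Monotone g :=
    monotone_of_deriv_nonneg (fun x => (hg x).differentiableAt)
      (by
        intro x
        rw [(hg x).deriv]
        have h1 := Real.exp_pos x
        have h2 := Dpos x
        have h3 : (D x)^2 - 4 * (p * Real.exp x * (1 - p)) = ((1-p) - p * Real.exp x)^2 := by
          simp only [hDdef]; ring
        rw [sub_nonneg, div_le_iff₀ (by positivity)]
        nlinarith)
  have hg0 : g 0 = 0 := by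
    simp [hgdef, hDdef, Real.exp_zero]
  have hinner : ∀ x : ℝ, 0 ≤ x → p * Real.exp x / D x ≤ p + x/4 := by
    intro x hx
    have := hgmono hx
    rw [hg0] at this
    simp only [hgdef] at this
    linarith
  -- outer function f
  set f : ℝ → ℝ := fun x => p * x + x^2/8 - Real.log (D x) with hfdef
  have hf : ∀ x, HasDerivAt f (p + x/4 - p * Real.exp x / D x) x := by
    intro x
    have h1 : HasDerivAt (fun x : ℝ => p * x + x^2/8) (p + x/4) x := by
      have ha : HasDerivAt (fun x : ℝ => p * x) p x := by
        simpa using (hasDerivAt_id x).const_mul p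
      have hb : HasDerivAt (fun x : ℝ => x^2/8) (x/4) x := by
        have := (hasDerivAt_pow 2 x).div_const 8
        refine this.congr_deriv ?_
        rw [show (2:ℕ) - 1 = 1 from rfl]
        push_cast
        ring
      exact ha.add hb
    have h2 : HasDerivAt (fun x => Real.log (D x)) (p * Real.exp x / D x) x :=
      (hD x).log (ne_of_gt (Dpos x))
    exact h1.sub h2
  have hfmono : MonotoneOn f (Set.Ici 0) := by
    apply monotoneOn_of_deriv_nonneg (convex_Ici 0)
    · exact (fun x _ => ((hf x).differentiableAt.continuousAt.continuousWithinAt))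
    · exact fun x _ => ((hf x).differentiableAt.differentiableWithinAt)
    · intro x hx
      rw [interior_Ici] at hx
      rw [(hf x).deriv]
      have := hinner x (le_of_lt hx)
      linarith
  have hf0 : f 0 = 0 := by
    simp [hfdef, hDdef, Real.exp_zero]
  have hft : 0 ≤ f t := by
    rw [← hf0]
    exact hfmono Set.self_mem_Ici ht ht
  simp only [hfdef] at hft
  have hlog : Real.log (D t) ≤ p * t + t^2/8 := by linarith
  calc D t = Real.exp (Real.log (D t)) := (Real.exp_log (Dpos t)).symm
    _ ≤ Real.exp (p * t + t^2/8) := Real.exp_le_exp.mpr hlog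

/-- **Hoeffding upper-tail bound for the hypergeometric distribution**: if
`X ~ Hypergeometric(N, K, n)` (so `E[X] = (K/N)·n`) and `χ ≥ 0` with
`K/N + χ ≤ 1`, then `Pr[X ≥ ((K/N) + χ)·n] ≤ exp(−2χ²n)`. -/
theorem hypergeometric_upper_tail (N K n : ℕ) (hN : 1 ≤ N) (hK : K ≤ N) (hn : n ≤ N)
    (χ : ℝ) (hχ : 0 ≤ χ) (hχ' : (K : ℝ) / N + χ ≤ 1) :
    (∑ j ∈ Finset.range (n + 1),
        if ((K : ℝ) / N + χ) * n ≤ (j : ℝ) then hypergeomPMF N K n j else 0)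
      ≤ Real.exp (-2 * χ ^ 2 * n) := by
  have hN0 : (0:ℝ) < N := by exact_mod_cast hN
  have hp0 : 0 ≤ (K:ℝ)/N := by positivity
  have hp1 : (K:ℝ)/N ≤ 1 := by
    rw [div_le_one hN0]; exact_mod_cast hK
  have hCpos : (0:ℝ) < (N.choose n : ℝ) := by exact_mod_cast Nat.choose_pos hn
  have ht : (0:ℝ) ≤ 4*χ := by positivity
  have step1 : (∑ j ∈ Finset.range (n + 1),
        if ((K : ℝ) / N + χ) * n ≤ (j : ℝ) then hypergeomPMF N K n j else 0)
      ≤ ∑ j ∈ Finset.range (n + 1),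
          hypergeomPMF N K n j * Real.exp ((4*χ)*j - (4*χ)*(((K:ℝ)/N + χ)*n)) := by
    apply Finset.sum_le_sum
    intro j _
    have hpmf : 0 ≤ hypergeomPMF N K n j := by unfold hypergeomPMF; positivity
    split_ifs with h
    · nth_rewrite 1 [← mul_one (hypergeomPMF N K n j)]
      apply mul_le_mul_of_nonneg_left _ hpmf
      rw [← Real.exp_zero]
      apply Real.exp_le_exp.mpr
      nlinarith
    · positivity
  have step2 : ∑ j ∈ Finset.range (n + 1),
        hypergeomPMF N K n j * Real.exp ((4*χ)*j - (4*χ)*(((K:ℝ)/N + χ)*n))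
      = (Real.exp (-((4*χ)*(((K:ℝ)/N + χ)*n))) / (N.choose n : ℝ)) *
          ∑ j ∈ Finset.range (n + 1),
            ((K.choose j * (N-K).choose (n-j) : ℕ) : ℝ) * (1 + (Real.exp (4*χ) - 1))^j := by
    rw [Finset.mul_sum]
    apply Finset.sum_congr rfl
    intro j _
    unfold hypergeomPMF
    have h1 : (1 + (Real.exp (4*χ) - 1))^j = Real.exp ((4*χ)*j) := by
      rw [add_sub_cancel, ← Real.exp_nat_mul, mul_comm]
    have h2 : Real.exp ((4*χ)*j - (4*χ)*(((K:ℝ)/N + χ)*n))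
        = Real.exp ((4*χ)*j) * Real.exp (-((4*χ)*(((K:ℝ)/N + χ)*n))) := by
      rw [← Real.exp_add]; ring_nf
    rw [h1, h2]
    push_cast
    field_simp
  have hexp1 : (0:ℝ) ≤ Real.exp (4*χ) - 1 := by
    have := Real.one_le_exp ht
    linarith
  have step3 := mgf_bound N K n hN hK hn (Real.exp (4*χ) - 1) hexp1
  have hbase : 1 + (K:ℝ)/N * (Real.exp (4*χ) - 1)
      = 1 - (K:ℝ)/N + (K:ℝ)/N * Real.exp (4*χ) := by ring
  have step4 : (1 + (K:ℝ)/N * (Real.exp (4*χ) - 1))^n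
      ≤ Real.exp ((K:ℝ)/N * (4*χ) + (4*χ)^2/8)^n := by
    apply pow_le_pow_left₀
    · rw [hbase]
      have := Real.one_le_exp ht
      nlinarith
    · rw [hbase]
      exact hoeff_core _ _ hp0 hp1 ht
  calc (∑ j ∈ Finset.range (n + 1),
        if ((K : ℝ) / N + χ) * n ≤ (j : ℝ) then hypergeomPMF N K n j else 0)
      ≤ (Real.exp (-((4*χ)*(((K:ℝ)/N + χ)*n))) / (N.choose n : ℝ)) *
          ∑ j ∈ Finset.range (n + 1),
            ((K.choose j * (N-K).choose (n-j) : ℕ) : ℝ) * (1 + (Real.exp (4*χ) - 1))^j := by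
        rw [← step2]; exact step1
    _ ≤ (Real.exp (-((4*χ)*(((K:ℝ)/N + χ)*n))) / (N.choose n : ℝ)) *
          ((N.choose n : ℝ) * (1 + (K:ℝ)/N * (Real.exp (4*χ) - 1))^n) := by
        apply mul_le_mul_of_nonneg_left step3 (by positivity)
    _ = Real.exp (-((4*χ)*(((K:ℝ)/N + χ)*n))) * (1 + (K:ℝ)/N * (Real.exp (4*χ) - 1))^n := by
        field_simp
    _ ≤ Real.exp (-((4*χ)*(((K:ℝ)/N + χ)*n))) * Real.exp ((K:ℝ)/N * (4*χ) + (4*χ)^2/8)^n := by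
        apply mul_le_mul_of_nonneg_left step4 (by positivity)
    _ = Real.exp (-((4*χ)*(((K:ℝ)/N + χ)*n)) + n * ((K:ℝ)/N * (4*χ) + (4*χ)^2/8)) := by
        rw [← Real.exp_nat_mul, ← Real.exp_add]
    _ = Real.exp (-2 * χ ^ 2 * n) := by
        congr 1
        ring
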